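/- Let N ≥ 3, γ > 0, and suppose g : (0,1) → ℝ is bounded. Define h(r) := r^{-(N-1)/(γ+1)} ∫_0^r τ^{(N-1)/(γ+1)} g(τ)/(γ+1) dτ and u(r) := -∫_r^1 h(t) dt. Then u satisfies (γ+1) u''(r) + (N-1) u'(r)/r = g(r) for 0 < r < 1, u(1) = 0, and there is a constant C = C(N,γ) such that sup_{0<r<1} (|u(r)| + |u'(r)|) ≤ C sup_{0<r<1} |g(r)|. -/

import Mathlib

open Real MeasureTheory intervalIntegral

/-- Explicit solution operator for the radial (k = 0 mode) part of L_γ,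
with uniform L^∞ estimates. -/
theorem radial_solution_operator (N : ℕ) (hN : 3 ≤ N) (γ : ℝ) (hγ : 0 < γ) :
    ∃ C > (0:ℝ), ∀ (g : ℝ → ℝ) (M : ℝ), ContinuousOn g (Set.Ioo (0:ℝ) 1) →
      (∀ r ∈ Set.Ioo (0:ℝ) 1, |g r| ≤ M) →
      ∀ h u : ℝ → ℝ,
        (∀ r : ℝ, h r = r ^ (-(((N : ℝ) - 1) / (γ + 1))) *
          ∫ τ in (0:ℝ)..r, τ ^ (((N : ℝ) - 1) / (γ + 1)) * g τ / (γ + 1)) →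
        (∀ r : ℝ, u r = -∫ s in r..(1:ℝ), h s) →
        (∀ r ∈ Set.Ioo (0:ℝ) 1,
          (γ + 1) * deriv (deriv u) r + ((N : ℝ) - 1) * deriv u r / r = g r) ∧
        u 1 = 0 ∧
        ∀ r ∈ Set.Ioo (0:ℝ) 1, |u r| + |deriv u r| ≤ C * M := by
  have hγ1 : (0:ℝ) < γ + 1 := by linarith
  set α : ℝ := ((N : ℝ) - 1) / (γ + 1) with hα_def
  have hN2 : (2:ℝ) ≤ (N:ℝ) - 1 := by
    have h3 : (3:ℝ) ≤ (N:ℝ) := by exact_mod_cast hN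
    linarith
  have hα : 0 < α := div_pos (by linarith) hγ1
  set K : ℝ := (γ + 1) * (α + 1) with hK_def
  have hK : (0:ℝ) < K := mul_pos hγ1 (by linarith)
  have hα1 : α + 1 ≠ 0 := by positivity
  clear_value α K
  refine ⟨2 / K, by positivity, ?_⟩
  intro g M hg hgM h u hh hu
  have hM : 0 ≤ M := le_trans (abs_nonneg _) (hgM (1/2) (by norm_num))
  set f : ℝ → ℝ := fun τ => τ ^ α * g τ / (γ + 1) with hf_def
  have hf_cont : ContinuousOn f (Set.Ioo (0:ℝ) 1) :=
    (((Real.continuous_rpow_const hα.le).continuousOn).mul hg).div_const _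
  have hf_norm : ∀ τ ∈ Set.Ioo (0:ℝ) 1, ‖f τ‖ = τ ^ α * |g τ| / (γ + 1) := by
    intro τ hτ
    have h0 : 0 ≤ τ ^ α := Real.rpow_nonneg hτ.1.le α
    rw [Real.norm_eq_abs, hf_def, abs_div, abs_mul, abs_of_nonneg h0, abs_of_pos hγ1]
  have hf_int : IntegrableOn f (Set.Ioo (0:ℝ) 1) := by
    apply Integrable.mono' (g := fun _ => M / (γ + 1))
        (integrableOn_const (C := M / (γ + 1)) (s := Set.Ioo (0:ℝ) 1) (μ := volume) measure_Ioo_lt_top.ne)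
        (hf_cont.aestronglyMeasurable measurableSet_Ioo)
    refine ae_restrict_of_forall_mem measurableSet_Ioo fun τ hτ => ?_
    rw [hf_norm τ hτ]
    have h1 : τ ^ α ≤ 1 := Real.rpow_le_one hτ.1.le hτ.2.le hα.le
    have h0 : 0 ≤ τ ^ α := Real.rpow_nonneg hτ.1.le α
    calc τ ^ α * |g τ| / (γ + 1) ≤ 1 * M / (γ + 1) := by
          gcongr; exact hgM τ hτ
      _ = M / (γ + 1) := by ring
  have hf_intOn : ∀ r ∈ Set.Ioc (0:ℝ) 1, IntervalIntegrable f volume 0 r := by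
    intro r hr
    rw [intervalIntegrable_iff_integrableOn_Ioc_of_le hr.1.le]
    exact (integrableOn_Ioc_iff_integrableOn_Ioo).mpr
      (hf_int.mono_set (Set.Ioo_subset_Ioo le_rfl hr.2))
  set F : ℝ → ℝ := fun r => ∫ τ in (0:ℝ)..r, f τ with hF_def
  have hF_deriv : ∀ r ∈ Set.Ioo (0:ℝ) 1, HasDerivAt F (f r) r := fun r hr =>
    integral_hasDerivAt_right (hf_intOn r ⟨hr.1, hr.2.le⟩)
      (hf_cont.stronglyMeasurableAtFilter isOpen_Ioo r hr)
      (hf_cont.continuousAt (isOpen_Ioo.mem_nhds hr))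
  have hF_cont : ContinuousOn F (Set.Icc (0:ℝ) 1) := by
    have h_int : IntegrableOn f (Set.Icc (0:ℝ) 1) :=
      (integrableOn_Icc_iff_integrableOn_Ioo).mpr hf_int
    exact (continuousOn_primitive h_int).congr fun x hx =>
      intervalIntegral.integral_of_le hx.1
  have hfun : h = fun x => x ^ (-α) * F x := funext fun x => hh x
  have hh_cont : ContinuousOn h (Set.Ioc (0:ℝ) 1) := by
    rw [hfun]
    exact ContinuousOn.mul
      (fun t ht => (Real.continuousAt_rpow_const t (-α) (Or.inl ht.1.ne')).continuousWithinAt)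
      (hF_cont.mono Set.Ioc_subset_Icc_self)
  have hh_cont' : ContinuousOn h (Set.Ioo (0:ℝ) 1) :=
    hh_cont.mono Set.Ioo_subset_Ioc_self
  have hh_int : ∀ r ∈ Set.Ioo (0:ℝ) 1, IntervalIntegrable h volume r 1 := by
    intro r hr
    apply ContinuousOn.intervalIntegrable
    rw [Set.uIcc_of_le hr.2.le]
    exact hh_cont.mono fun x hx => ⟨lt_of_lt_of_le hr.1 hx.1, hx.2⟩
  have hu' : u = fun r => ∫ s in (1:ℝ)..r, h s := by
    funext r
    rw [hu r, ← intervalIntegral.integral_symm]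
  have hu_deriv : ∀ r ∈ Set.Ioo (0:ℝ) 1, HasDerivAt u (h r) r := by
    intro r hr
    rw [hu']
    exact integral_hasDerivAt_right (hh_int r hr).symm
      (hh_cont'.stronglyMeasurableAtFilter isOpen_Ioo r hr)
      (hh_cont'.continuousAt (isOpen_Ioo.mem_nhds hr))
  have hderiv_u : ∀ r ∈ Set.Ioo (0:ℝ) 1, deriv u r = h r := fun r hr =>
    (hu_deriv r hr).deriv
  -- bound on F
  have hF_bound : ∀ t ∈ Set.Ioc (0:ℝ) 1, |F t| ≤ M * t ^ (α + 1) / K := by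
    intro t ht
    have hb_int : IntervalIntegrable (fun τ => τ ^ α * (M / (γ + 1))) volume 0 t :=
      (intervalIntegral.intervalIntegrable_rpow' (by linarith)).mul_const _
    have hbound : ∀ᵐ τ ∂(volume.restrict (Set.uIoc (0:ℝ) t)),
        ‖f τ‖ ≤ τ ^ α * (M / (γ + 1)) := by
      rw [Set.uIoc_of_le ht.1.le, ← Measure.restrict_congr_set Ioo_ae_eq_Ioc]
      refine ae_restrict_of_forall_mem measurableSet_Ioo fun τ hτ => ?_
      have hτ1 : τ ∈ Set.Ioo (0:ℝ) 1 := ⟨hτ.1, lt_of_lt_of_le hτ.2 ht.2⟩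
      rw [hf_norm τ hτ1]
      calc τ ^ α * |g τ| / (γ + 1) ≤ τ ^ α * M / (γ + 1) := by
            gcongr
            · exact Real.rpow_nonneg hτ.1.le α
            · exact hgM τ hτ1
        _ = τ ^ α * (M / (γ + 1)) := by ring
    have hle := intervalIntegral.norm_integral_le_abs_of_norm_le hbound hb_int
    rw [intervalIntegral.integral_mul_const,
      integral_rpow (Or.inl (by linarith : (-1:ℝ) < α)),
      Real.zero_rpow (by positivity : (0:ℝ) < α + 1).ne'] at hle
    rw [sub_zero] at hle
    have hval : 0 ≤ t ^ (α + 1) / (α + 1) * (M / (γ + 1)) := by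
      have h9 : (0:ℝ) ≤ t ^ (α + 1) := Real.rpow_nonneg ht.1.le _
      positivity
    rw [abs_of_nonneg hval] at hle
    calc |F t| ≤ t ^ (α + 1) / (α + 1) * (M / (γ + 1)) := hle
      _ = M * t ^ (α + 1) / K := by rw [hK_def]; field_simp
  clear_value f F
  have hh_bound : ∀ t ∈ Set.Ioc (0:ℝ) 1, |h t| ≤ M / K := by
    intro t ht
    have h0 : (0:ℝ) ≤ t ^ (-α) := Real.rpow_nonneg ht.1.le _
    have e3 : t ^ (-α) * t ^ (α + 1) = t := by
      rw [← Real.rpow_add ht.1, show -α + (α + 1) = 1 by ring, Real.rpow_one]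
    calc |h t| = t ^ (-α) * |F t| := by
          simp only [hfun]
          rw [abs_mul, abs_of_nonneg h0]
      _ ≤ t ^ (-α) * (M * t ^ (α + 1) / K) := by
          gcongr
          exact hF_bound t ht
      _ = M * (t ^ (-α) * t ^ (α + 1)) / K := by ring
      _ = M * t / K := by rw [e3]
      _ ≤ M * 1 / K := by gcongr; exact ht.2
      _ = M / K := by ring
  refine ⟨?_, ?_, ?_⟩
  · -- the ODE
    intro r hr
    have hderiv2 : deriv (deriv u) r = deriv h r := by
      apply Filter.EventuallyEq.deriv_eq
      exact Filter.eventuallyEq_of_mem (isOpen_Ioo.mem_nhds hr) fun x hx => hderiv_u x hx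
    have h1 : HasDerivAt (fun x : ℝ => x ^ (-α)) (-α * r ^ (-α - 1)) r :=
      Real.hasDerivAt_rpow_const (Or.inl hr.1.ne')
    have h3 : HasDerivAt h (-α * r ^ (-α - 1) * F r + r ^ (-α) * f r) r := by
      rw [hfun]; exact h1.mul (hF_deriv r hr)
    rw [hderiv2, h3.deriv, hderiv_u r hr]
    have hNα : (N:ℝ) - 1 = α * (γ + 1) := by
      rw [hα_def]; field_simp
    have e1 : r ^ (-α - 1) = r ^ (-α) / r := by
      rw [Real.rpow_sub hr.1, Real.rpow_one]
    have e2 : r ^ (-α) * r ^ α = 1 := by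
      rw [← Real.rpow_add hr.1]; simp
    simp only [hfun, hf_def]
    rw [hNα, e1]
    field_simp
    linear_combination g r * e2
  · rw [hu 1, intervalIntegral.integral_same, neg_zero]
  · intro r hr
    have hbd_u : |u r| ≤ M / K := by
      rw [hu r, abs_neg, ← Real.norm_eq_abs]
      have hle := intervalIntegral.norm_integral_le_of_norm_le_const
        (C := M / K) (a := r) (b := 1) (f := h) ?_
      · calc ‖∫ s in r..(1:ℝ), h s‖ ≤ M / K * |1 - r| := hle
          _ ≤ M / K * 1 := by
              have habs : |1 - r| ≤ 1 := by
                rw [abs_of_nonneg (by linarith [hr.2] : (0:ℝ) ≤ 1 - r)]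
                linarith [hr.1]
              exact mul_le_mul_of_nonneg_left habs (by positivity)
          _ = M / K := by ring
      · intro x hx
        rw [Set.uIoc_of_le hr.2.le] at hx
        exact hh_bound x ⟨lt_trans hr.1 hx.1, hx.2⟩
    have hbd_u' : |deriv u r| ≤ M / K := by
      rw [hderiv_u r hr]
      exact hh_bound r ⟨hr.1, hr.2.le⟩
    calc |u r| + |deriv u r| ≤ M / K + M / K := add_le_add hbd_u hbd_u'
      _ = 2 / K * M := by ring
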